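/- Let t₁ < t₊ ≤ t₀ ≤ t₂, λ = (t₂−t₀)/(t₂−t₁) ∈ [0,1], μ = (t₂−t₀)/(t₂−t₊), α = (t₀−t₊)/(t₀−t₁). Then λ(1−α)|t₀−t₁|² + μ(1−λ)|t₂−t₊|² ≤ 2 λ(1−λ) |t₂−t₁|². -/
import Mathlib


/-- With `λ = (t₂−t₀)/(t₂−t₁)`, `μ = (t₂−t₀)/(t₂−t₊)`, `α = (t₀−t₊)/(t₀−t₁)` and
`t₁ < t₊ ≤ t₀ ≤ t₂`, one has `λ(1−α)|t₀−t₁|² + μ(1−λ)|t₂−t₊|² ≤ 2λ(1−λ)|t₂−t₁|²`. -/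
theorem stmt8 (t₁ tp t₀ t₂ : ℝ) (h1 : t₁ < tp) (h2 : tp ≤ t₀) (h3 : t₀ ≤ t₂) :
    ((t₂ - t₀) / (t₂ - t₁)) * (1 - (t₀ - tp) / (t₀ - t₁)) * |t₀ - t₁| ^ 2 +
        ((t₂ - t₀) / (t₂ - tp)) * (1 - (t₂ - t₀) / (t₂ - t₁)) * |t₂ - tp| ^ 2 ≤
      2 * ((t₂ - t₀) / (t₂ - t₁)) * (1 - (t₂ - t₀) / (t₂ - t₁)) * |t₂ - t₁| ^ 2 := by
  have ha : (0:ℝ) < t₀ - t₁ := by linarith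
  have hd : (0:ℝ) < t₂ - t₁ := by linarith
  rcases eq_or_lt_of_le (h2.trans h3) with heq | hlt
  · have h0 : t₀ = t₂ := le_antisymm h3 (heq ▸ h2)
    subst h0
    simp [← heq]
  · have hbc : (0:ℝ) < t₂ - tp := by linarith
    rw [abs_of_pos ha, abs_of_pos hbc, abs_of_pos hd]
    have e1 : (t₂ - t₀) / (t₂ - t₁) * (1 - (t₀ - tp) / (t₀ - t₁)) * (t₀ - t₁) ^ 2 +
        (t₂ - t₀) / (t₂ - tp) * (1 - (t₂ - t₀) / (t₂ - t₁)) * (t₂ - tp) ^ 2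
        = (t₂ - t₀) * (t₀ - t₁) := by
      field_simp
      ring
    have e2 : 2 * ((t₂ - t₀) / (t₂ - t₁)) * (1 - (t₂ - t₀) / (t₂ - t₁)) * (t₂ - t₁) ^ 2
        = 2 * ((t₂ - t₀) * (t₀ - t₁)) := by
      field_simp
      ring
    rw [e1, e2]
    nlinarith [mul_nonneg (sub_nonneg.2 h3) ha.le]
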